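/- Suppose f : ℕⁿ → K satisfies the difference equation Σ_{0 ≤ α ≤ m} c_α f(x+α) = 0 for every x ∈ ℕⁿ, and let φ : ℕⁿ → K equal f on X₀ and 0 on ℕⁿ∖X₀. For J ∈ {0,1}ⁿ let Γ_J = {x ∈ ℕⁿ : x ≤ m, and for each k, x_k = m_k if J_k = 1 and x_k < m_k if J_k = 0}; for τ ∈ Γ_J let Φ_{τ,J} = Σ_{y ∈ ℕⁿ with y_k = 0 whenever J_k = 0} φ(τ+y) · w^{τ+y+I} ∈ K⟦w₁,…,wₙ⟧, and let P̃_τ = Σ_{α ≤ m, ¬(α ≤ τ)} c_α · w^{m−α}. Then Q · G = Σ_{J ∈ {0,1}ⁿ} Σ_{τ ∈ Γ_J} Φ_{τ,J} · P̃_τ. -/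

import Mathlib

/-- Theorem 2 of the paper: if `f : ℕⁿ → K` satisfies the difference equation
`Σ_{0 ≤ α ≤ m} c_α f(x+α) = 0` and `φ` equals `f` on `X₀` and `0` elsewhere, then
`Q·G = Σ_{J ∈ {0,1}ⁿ} Σ_{τ ∈ Γ_J} Φ_{τ,J} · P̃_τ`, where `Γ_J` is the face of the box
`{0 ≤ x ≤ m}` given by `J`, `Φ_{τ,J} = Σ_{y, supp y ⊆ {k : J_k = 1}} φ(τ+y) w^{τ+y+I}`
and `P̃_τ = Σ_{α ≤ m, ¬(α ≤ τ)} c_α w^{m−α}`. -/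
theorem generating_series_theorem_two
    (n : ℕ) (hn : 1 ≤ n) (K : Type*) [Field K]
    (m : Fin n →₀ ℕ) (c : (Fin n →₀ ℕ) → K) (f : (Fin n →₀ ℕ) → K)
    (hf : ∀ x : Fin n →₀ ℕ, ∑ α ∈ Finset.Iic m, c α * f (x + α) = 0)
    (φ : (Fin n →₀ ℕ) → K)
    (hφ : ∀ x : Fin n →₀ ℕ, φ x = if ¬ m ≤ x then f x else 0)
    (I : Fin n →₀ ℕ) (hI : ∀ j, I j = 1)
    (G : MvPowerSeries (Fin n) K)
    (hG : ∀ e : Fin n →₀ ℕ,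
      MvPowerSeries.coeff e G = if I ≤ e then f (e - I) else 0)
    (Q : MvPowerSeries (Fin n) K)
    (hQ : Q = ∑ α ∈ Finset.Iic m, (MvPowerSeries.monomial (m - α)) (c α))
    (Φ : (Fin n → Bool) → (Fin n →₀ ℕ) → MvPowerSeries (Fin n) K)
    (hΦ : ∀ (J : Fin n → Bool) (τ e : Fin n →₀ ℕ),
      MvPowerSeries.coeff e (Φ J τ) =
        if I ≤ e ∧ τ ≤ e - I ∧ (∀ k, J k = false → (e - I) k = τ k)
        then φ (e - I) else 0) :
    Q * G =
      ∑ J : Fin n → Bool,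
        ∑ τ ∈ (Finset.Iic m).filter
            (fun x => ∀ k, if J k then x k = m k else x k < m k),
          Φ J τ *
            ∑ α ∈ (Finset.Iic m).filter (fun α => ¬ α ≤ τ),
              (MvPowerSeries.monomial (m - α)) (c α) := by
  classical
  ext e
  have hle : ∀ a b : Fin n →₀ ℕ, a ≤ b ↔ ∀ k, a k ≤ b k := fun a b => Finsupp.le_def
  have hsub : ∀ (a b : Fin n →₀ ℕ) (k : Fin n), (a - b) k = a k - b k := by
    intro a b k; simp [Finsupp.coe_tsub]
  -- the shifted index
  have hxk : ∀ (α : Fin n →₀ ℕ) (k : Fin n), (e - (m - α) - I) k = e k - (m k - α k) - 1 := by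
    intro α k; rw [hsub, hsub, hsub, hI]
  have hcond : ∀ α : Fin n →₀ ℕ,
      (m - α ≤ e ∧ I ≤ e - (m - α)) ↔ ∀ k, m k - α k + 1 ≤ e k := by
    intro α
    constructor
    · rintro ⟨h1, h2⟩ k
      have h2k := (hle _ _).1 h2 k
      rw [hsub, hI] at h2k
      rw [hsub] at h2k
      omega
    · intro h
      refine ⟨(hle _ _).2 fun k => ?_, (hle _ _).2 fun k => ?_⟩
      · rw [hsub]; have := h k; omega
      · rw [hsub, hsub, hI]; have := h k; omega
  -- LHS coefficient
  have hLHS : MvPowerSeries.coeff e (Q * G)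
      = ∑ α ∈ Finset.Iic m,
          (if ∀ k, m k - α k + 1 ≤ e k then c α * f (e - (m - α) - I) else 0) := by
    rw [hQ, Finset.sum_mul, map_sum]
    refine Finset.sum_congr rfl fun α _ => ?_
    rw [MvPowerSeries.coeff_monomial_mul, hG]
    by_cases h : ∀ k, m k - α k + 1 ≤ e k
    · obtain ⟨h1, h2⟩ := (hcond α).2 h
      rw [if_pos h1, if_pos h2, if_pos h]
    · rw [if_neg h]
      by_cases h1 : m - α ≤ e
      · rw [if_pos h1, if_neg, mul_zero]
        intro h2; exact h ((hcond α).1 ⟨h1, h2⟩)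
      · rw [if_neg h1]
  -- RHS coefficient as a triple sum
  set g : (Fin n → Bool) → (Fin n →₀ ℕ) → (Fin n →₀ ℕ) → K := fun J τ α =>
    if (¬ α ≤ τ) ∧ (∀ k, m k - α k + 1 ≤ e k) ∧ τ ≤ e - (m - α) - I ∧
        (∀ k, J k = false → (e - (m - α) - I) k = τ k)
      then φ (e - (m - α) - I) * c α else 0 with hg
  have hRHS : MvPowerSeries.coeff e
      (∑ J : Fin n → Bool,
        ∑ τ ∈ (Finset.Iic m).filter
            (fun x => ∀ k, if J k then x k = m k else x k < m k),
          Φ J τ *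
            ∑ α ∈ (Finset.Iic m).filter (fun α => ¬ α ≤ τ),
              (MvPowerSeries.monomial (m - α)) (c α))
      = ∑ J : Fin n → Bool,
          ∑ τ ∈ (Finset.Iic m).filter
              (fun x => ∀ k, if J k then x k = m k else x k < m k),
            ∑ α ∈ Finset.Iic m, g J τ α := by
    rw [map_sum]
    refine Finset.sum_congr rfl fun J _ => ?_
    rw [map_sum]
    refine Finset.sum_congr rfl fun τ hτ => ?_
    rw [Finset.mul_sum, map_sum, Finset.sum_filter]
    refine Finset.sum_congr rfl fun α hα => ?_
    rw [hg]; beta_reduce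
    by_cases hA : ¬ α ≤ τ
    · rw [if_pos hA, MvPowerSeries.coeff_mul_monomial, hΦ]
      by_cases hB : ∀ k, m k - α k + 1 ≤ e k
      · obtain ⟨h1, h2⟩ := (hcond α).2 hB
        rw [if_pos h1]
        by_cases hC : τ ≤ e - (m - α) - I ∧
            (∀ k, J k = false → (e - (m - α) - I) k = τ k)
        · have hc1p : I ≤ e - (m - α) ∧ τ ≤ e - (m - α) - I ∧
              ∀ k, J k = false → (e - (m - α) - I) k = τ k := ⟨h2, hC.1, hC.2⟩
          have hc2p : (¬ α ≤ τ) ∧ (∀ k, m k - α k + 1 ≤ e k) ∧ τ ≤ e - (m - α) - I ∧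
              ∀ k, J k = false → (e - (m - α) - I) k = τ k := ⟨hA, hB, hC.1, hC.2⟩
          rw [if_pos hc1p, if_pos hc2p]
        · have hc1 : ¬(I ≤ e - (m - α) ∧ τ ≤ e - (m - α) - I ∧
              ∀ k, J k = false → (e - (m - α) - I) k = τ k) := fun h => hC ⟨h.2.1, h.2.2⟩
          have hc2 : ¬((¬ α ≤ τ) ∧ (∀ k, m k - α k + 1 ≤ e k) ∧ τ ≤ e - (m - α) - I ∧
              ∀ k, J k = false → (e - (m - α) - I) k = τ k) := fun h => hC ⟨h.2.2.1, h.2.2.2⟩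
          rw [if_neg hc1, zero_mul, if_neg hc2]
      · have hc2 : ¬((¬ α ≤ τ) ∧ (∀ k, m k - α k + 1 ≤ e k) ∧ τ ≤ e - (m - α) - I ∧
            ∀ k, J k = false → (e - (m - α) - I) k = τ k) := fun h => hB h.2.1
        by_cases h1 : m - α ≤ e
        · have hc1 : ¬(I ≤ e - (m - α) ∧ τ ≤ e - (m - α) - I ∧
              ∀ k, J k = false → (e - (m - α) - I) k = τ k) :=
            fun h => hB ((hcond α).1 ⟨h1, h.1⟩)
          rw [if_pos h1, if_neg hc1, zero_mul, if_neg hc2]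
        · rw [if_neg h1, if_neg hc2]
    · have hc2 : ¬((¬ α ≤ τ) ∧ (∀ k, m k - α k + 1 ≤ e k) ∧ τ ≤ e - (m - α) - I ∧
          ∀ k, J k = false → (e - (m - α) - I) k = τ k) := fun h => hA h.1
      rw [if_neg hA, if_neg hc2]
  rw [hLHS, hRHS]
  by_cases hbig : ∀ k, m k + 1 ≤ e k
  · -- all coordinates of e are beyond m: both sides vanish
    have hR0 : (∑ J : Fin n → Bool,
        ∑ τ ∈ (Finset.Iic m).filter
            (fun x => ∀ k, if J k then x k = m k else x k < m k),
          ∑ α ∈ Finset.Iic m, g J τ α) = 0 := by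
      refine Finset.sum_eq_zero fun J _ => Finset.sum_eq_zero fun τ hτ =>
        Finset.sum_eq_zero fun α hα => ?_
      obtain ⟨hτm, hτJ⟩ := Finset.mem_filter.1 hτ
      have hτm' : τ ≤ m := Finset.mem_Iic.1 hτm
      have hαm : α ≤ m := Finset.mem_Iic.1 hα
      rw [hg]; beta_reduce
      rw [if_neg]
      rintro ⟨h1, h2, h3, h4⟩
      refine h1 ((hle _ _).2 fun k => ?_)
      have hτJk := hτJ k
      cases hJk : J k with
      | false =>
        rw [hJk] at hτJk; simp at hτJk
        have := h4 k hJk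
        rw [hxk] at this
        have := hbig k
        have := (hle _ _).1 hαm k
        omega
      | true =>
        rw [hJk] at hτJk; simp at hτJk
        rw [hτJk]
        exact (hle _ _).1 hαm k
    rw [hR0]
    have : (∑ α ∈ Finset.Iic m,
        (if ∀ k, m k - α k + 1 ≤ e k then c α * f (e - (m - α) - I) else 0))
        = ∑ α ∈ Finset.Iic m, c α * f ((e - m - I) + α) := by
      refine Finset.sum_congr rfl fun α hα => ?_
      have hαm : α ≤ m := Finset.mem_Iic.1 hα
      rw [if_pos]
      · congr 2
        ext k
        rw [hxk]
        simp only [Finsupp.coe_add, Pi.add_apply]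
        rw [hsub, hsub, hI]
        have := hbig k
        have := (hle _ _).1 hαm k
        omega
      · intro k
        have := hbig k
        have := (hle _ _).1 hαm k
        omega
    rw [this, hf (e - m - I)]
  · -- some coordinate k₀ of e satisfies e k₀ ≤ m k₀
    obtain ⟨k₀, hk₀⟩ := not_forall.1 hbig
    have hk₀' : e k₀ ≤ m k₀ := by omega
    -- swap sums
    have hswap : (∑ J : Fin n → Bool,
        ∑ τ ∈ (Finset.Iic m).filter
            (fun x => ∀ k, if J k then x k = m k else x k < m k),
          ∑ α ∈ Finset.Iic m, g J τ α)
        = ∑ α ∈ Finset.Iic m, ∑ J : Fin n → Bool,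
            ∑ τ ∈ (Finset.Iic m).filter
                (fun x => ∀ k, if J k then x k = m k else x k < m k),
              g J τ α := by
      calc (∑ J : Fin n → Bool,
          ∑ τ ∈ (Finset.Iic m).filter
              (fun x => ∀ k, if J k then x k = m k else x k < m k),
            ∑ α ∈ Finset.Iic m, g J τ α)
          = ∑ J : Fin n → Bool, ∑ α ∈ Finset.Iic m,
              ∑ τ ∈ (Finset.Iic m).filter
                  (fun x => ∀ k, if J k then x k = m k else x k < m k),
                g J τ α := Finset.sum_congr rfl fun J _ => Finset.sum_comm
        _ = _ := Finset.sum_comm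
    rw [hswap]
    refine Finset.sum_congr rfl fun α hα => ?_
    have hαm : α ≤ m := Finset.mem_Iic.1 hα
    by_cases hB : ∀ k, m k - α k + 1 ≤ e k
    · rw [if_pos hB]
      have hτ₀k : ∀ k, ((e - (m - α) - I) ⊓ m) k = min ((e - (m - α) - I) k) (m k) :=
        fun k => Finsupp.inf_apply _ _ _
      have hxk₀ : (e - (m - α) - I) k₀ < α k₀ := by
        rw [hxk]
        have := hB k₀
        have := (hle _ _).1 hαm k₀
        omega
      have h1 : (∑ J : Fin n → Bool,
          ∑ τ ∈ (Finset.Iic m).filter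
              (fun x => ∀ k, if J k then x k = m k else x k < m k),
            g J τ α)
          = ∑ τ ∈ (Finset.Iic m).filter
              (fun x => ∀ k, if (decide (m k ≤ (e - (m - α) - I) k) : Bool)
                  then x k = m k else x k < m k),
              g (fun k => decide (m k ≤ (e - (m - α) - I) k)) τ α := by
        refine Fintype.sum_eq_single _ fun J hJ => Finset.sum_eq_zero fun τ hτ => ?_
        obtain ⟨hτm, hτJ⟩ := Finset.mem_filter.1 hτ
        rw [hg]; beta_reduce
        rw [if_neg]
        rintro ⟨hh1, hh2, hh3, hh4⟩
        refine hJ (funext fun k => ?_)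
        have hτJk := hτJ k
        cases hJk : J k with
        | true =>
          rw [hJk] at hτJk; simp at hτJk
          have h3k := (hle _ _).1 hh3 k
          rw [hτJk] at h3k
          exact (decide_eq_true h3k).symm
        | false =>
          rw [hJk] at hτJk; simp at hτJk
          have h4k := hh4 k hJk
          refine (decide_eq_false fun hcon => ?_).symm
          rw [h4k] at hcon
          omega
      have h2 : (∑ τ ∈ (Finset.Iic m).filter
            (fun x => ∀ k, if (decide (m k ≤ (e - (m - α) - I) k) : Bool)
                then x k = m k else x k < m k),
            g (fun k => decide (m k ≤ (e - (m - α) - I) k)) τ α)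
          = g (fun k => decide (m k ≤ (e - (m - α) - I) k)) ((e - (m - α) - I) ⊓ m) α := by
        refine Finset.sum_eq_single_of_mem _ ?_ ?_
        · refine Finset.mem_filter.2 ⟨Finset.mem_Iic.2 inf_le_right, fun k => ?_⟩
          by_cases hk : m k ≤ (e - (m - α) - I) k
          · rw [if_pos (decide_eq_true hk), hτ₀k k]
            exact min_eq_right hk
          · rw [if_neg (fun hcon => hk (of_decide_eq_true hcon)), hτ₀k k]
            have hlt : (e - (m - α) - I) k < m k := Nat.lt_of_not_le hk
            rw [min_eq_left hlt.le]
            exact hlt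
        · intro τ hτ hne
          obtain ⟨hτm, hτJ⟩ := Finset.mem_filter.1 hτ
          rw [hg]; beta_reduce
          rw [if_neg]
          rintro ⟨hh1, hh2, hh3, hh4⟩
          refine hne (Finsupp.ext fun k => ?_)
          have hτJk := hτJ k
          rw [hτ₀k k]
          by_cases hk : m k ≤ (e - (m - α) - I) k
          · rw [if_pos (decide_eq_true hk)] at hτJk
            rw [hτJk, min_eq_right hk]
          · rw [if_neg (fun hcon => hk (of_decide_eq_true hcon))] at hτJk
            have h4k := hh4 k (decide_eq_false hk)
            rw [min_eq_left (Nat.le_of_lt (Nat.lt_of_not_le hk))]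
            exact h4k.symm
      have hnm : ¬ m ≤ e - (m - α) - I := by
        intro hcon
        have := (hle _ _).1 hcon k₀
        have := (hle _ _).1 hαm k₀
        omega
      have hgc : (¬ α ≤ (e - (m - α) - I) ⊓ m) ∧ (∀ k, m k - α k + 1 ≤ e k) ∧
          (e - (m - α) - I) ⊓ m ≤ e - (m - α) - I ∧
          (∀ k, (fun k => decide (m k ≤ (e - (m - α) - I) k)) k = false →
            (e - (m - α) - I) k = ((e - (m - α) - I) ⊓ m) k) := by
        refine ⟨?_, hB, inf_le_left, fun k hk => ?_⟩
        · intro hcon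
          have hc := (hle _ _).1 hcon k₀
          rw [hτ₀k k₀] at hc
          have hm1 : min ((e - (m - α) - I) k₀) (m k₀) ≤ (e - (m - α) - I) k₀ :=
            min_le_left _ _
          omega
        · have hk' : ¬ m k ≤ (e - (m - α) - I) k := fun hcon =>
            Bool.noConfusion ((decide_eq_true hcon).symm.trans hk)
          rw [hτ₀k k, min_eq_left (Nat.le_of_lt (Nat.lt_of_not_le hk'))]
      rw [h1, h2, hg]; beta_reduce
      rw [if_pos hgc, hφ, if_pos hnm, mul_comm]
    · rw [if_neg hB]
      refine (Finset.sum_eq_zero fun J _ => Finset.sum_eq_zero fun τ hτ => ?_).symm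
      rw [hg]; beta_reduce
      rw [if_neg]
      rintro ⟨hh1, hh2, hh3, hh4⟩
      exact hB hh2
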